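/- Let (A, λ_A) be an object of C_𝒪 and M a finitely generated A-module with depth_A M ≥ 1. Then M[𝔭_A] ∩ M[I_A] = (0); in particular I_A·M ∩ 𝔭_A·M = (0). -/

import Mathlib

open IsLocalRing CategoryTheory

noncomputable section

/-- The length of a module, defined as the Krull dimension of its lattice of submodules. -/
noncomputable def mLength (R M : Type) [Ring R] [AddCommGroup M] [Module R M] :
    WithBot ℕ∞ :=
  Order.krullDim (Submodule R M)

/-- The depth of a module over a local ring: the supremum of the lengths of
regular sequences on `M` consisting of elements of the maximal ideal. -/
noncomputable def mDepth (A : Type) [CommRing A] [IsLocalRing A]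
    (M : Type) [AddCommGroup M] [Module A M] : ℕ∞ :=
  sSup {n : ℕ∞ | ∃ rs : List A, (rs.length : ℕ∞) = n ∧
    (∀ x ∈ rs, x ∈ maximalIdeal A) ∧ RingTheory.Sequence.IsRegular M rs}

/-- The `𝒪`-module structure on an `A`-module killed by `ker lam`,
obtained through the isomorphism `A ⧸ ker lam ≃ 𝒪`. -/
noncomputable def oModule {𝒪 A : Type} [CommRing 𝒪] [CommRing A] (lam : A →+* 𝒪)
    (hs : Function.Surjective lam) (M : Type) [AddCommGroup M] [Module A M]
    (h : Module.IsTorsionBySet A M (RingHom.ker lam : Set A)) : Module 𝒪 M :=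
  letI := h.module
  Module.compHom M (RingHom.quotientKerEquivOfSurjective hs).symm.toRingHom

/-- The length over `𝒪` of an `A`-module killed by `ker lam`. -/
noncomputable def oLength {𝒪 A : Type} [CommRing 𝒪] [CommRing A] (lam : A →+* 𝒪)
    (hs : Function.Surjective lam) (M : Type) [AddCommGroup M] [Module A M]
    (h : Module.IsTorsionBySet A M (RingHom.ker lam : Set A)) : WithBot ℕ∞ :=
  letI := oModule lam hs M h
  mLength 𝒪 M

/-- `M` has finite length as an `𝒪`-module. -/
def OFiniteLength {𝒪 A : Type} [CommRing 𝒪] [CommRing A] (lam : A →+* 𝒪)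
    (hs : Function.Surjective lam) (M : Type) [AddCommGroup M] [Module A M]
    (h : Module.IsTorsionBySet A M (RingHom.ker lam : Set A)) : Prop :=
  letI := oModule lam hs M h
  IsFiniteLength 𝒪 M

/-- The rank over `𝒪` of an `A`-module killed by `ker lam`: the dimension over the
fraction field `K` of `𝒪` of the base change `K ⊗_𝒪 M`. -/
noncomputable def oRank {𝒪 A : Type} [CommRing 𝒪] [IsDomain 𝒪] [CommRing A] (lam : A →+* 𝒪)
    (hs : Function.Surjective lam) (M : Type) [AddCommGroup M] [Module A M]
    (h : Module.IsTorsionBySet A M (RingHom.ker lam : Set A)) : Cardinal :=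
  letI := oModule lam hs M h
  Module.rank (FractionRing 𝒪) (TensorProduct 𝒪 (FractionRing 𝒪) M)

lemma torsionBySet_torsion {A M : Type} [CommRing A] [AddCommGroup M] [Module A M]
    (s : Set A) : Module.IsTorsionBySet A (Submodule.torsionBySet A M s) s :=
  Submodule.torsionBySet_isTorsionBySet s

/-- The annihilator `A[J]` of an ideal `J` is killed by `J`. -/
lemma annihilator_torsion {A : Type} [CommRing A] (J : Ideal A) :
    Module.IsTorsionBySet A (Submodule.annihilator J) (J : Set A) := by
  rintro ⟨x, hx⟩ ⟨a, ha⟩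
  apply Subtype.ext
  have := (Submodule.mem_annihilator.mp hx) a ha
  simpa [smul_eq_mul, mul_comm] using this

lemma submodule_torsion {A M : Type} [CommRing A] [AddCommGroup M] [Module A M] {s : Set A}
    (h : Module.IsTorsionBySet A M s) (P : Submodule A M) :
    Module.IsTorsionBySet A P s := by
  rintro ⟨x, hx⟩ a
  apply Subtype.ext
  simpa using @h x a

lemma quotient_torsion {A M : Type} [CommRing A] [AddCommGroup M] [Module A M] {s : Set A}
    (h : Module.IsTorsionBySet A M s) (P : Submodule A M) :
    Module.IsTorsionBySet A (M ⧸ P) s := by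
  rintro x a
  obtain ⟨y, rfl⟩ := Submodule.Quotient.mk_surjective P x
  rw [← Submodule.Quotient.mk_smul, @h y a]
  rfl

lemma cotangent_torsion {A : Type} [CommRing A] {I : Ideal A} {s : Set A}
    (h : Module.IsTorsionBySet A I s) :
    Module.IsTorsionBySet A I.Cotangent s := by
  rintro x a
  obtain ⟨y, rfl⟩ := I.toCotangent_surjective x
  rw [← map_smul, @h y a, map_zero]

/-- The conormal module `I/I²` is killed by `I`. -/
lemma conormal_torsion {A : Type} [CommRing A] (I : Ideal A) :
    Module.IsTorsionBySet A I.Cotangent (I : Set A) := by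
  rintro x ⟨a, ha⟩
  obtain ⟨y, rfl⟩ := I.toCotangent_surjective x
  rw [← map_smul]
  refine (I.toCotangent_eq_zero _).mpr ?_
  have : ((a • y : I) : A) = a * (y : A) := rfl
  rw [this, pow_two]
  exact Ideal.mul_mem_mul ha y.2

/-- If `P` contains the `A[J]`-torsion of `M`, then `M ⧸ P` is killed by `J`;
in particular congruence modules `M/(M[𝔭] + M[I])` are killed by `𝔭`. -/
lemma quot_tors {A M : Type} [CommRing A] [AddCommGroup M] [Module A M] (J : Ideal A)
    (P : Submodule A M)
    (hP : Submodule.torsionBySet A M ((Submodule.annihilator J : Ideal A) : Set A) ≤ P) :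
    Module.IsTorsionBySet A (M ⧸ P) (J : Set A) := by
  rintro x ⟨a, ha⟩
  obtain ⟨y, rfl⟩ := Submodule.Quotient.mk_surjective P x
  rw [← Submodule.Quotient.mk_smul, Submodule.Quotient.mk_eq_zero]
  apply hP
  rw [Submodule.mem_torsionBySet_iff]
  rintro ⟨b, hb⟩
  have hba : b * a = 0 := (Submodule.mem_annihilator.mp hb) a ha
  calc b • a • y = (b * a) • y := (mul_smul b a y).symm
  _ = 0 := by rw [hba, zero_smul]

/-- A commutative ring has finite self-injective dimension if `Ext^i(-, R)`
vanishes for all large `i`.  For a noetherian local ring this is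
the Gorenstein condition. -/
def HasFiniteInjectiveDimension (A : Type) [CommRing A] : Prop :=
  ∃ n : ℕ, ∀ (M : ModuleCat A) (i : ℕ), n < i →
    Subsingleton (((Ext A (ModuleCat A) i).obj (Opposite.op M)).obj (ModuleCat.of A A))

/-- A noetherian local ring is regular if the dimension of its cotangent space
equals its Krull dimension. -/
def IsRegularLocal (R : Type) [CommRing R] [IsLocalRing R] [IsNoetherianRing R] : Prop :=
  (Module.finrank (ResidueField R) (CotangentSpace R) : WithBot ℕ∞) = ringKrullDim R

/-- A noetherian local ring is a complete intersection if its completion at the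
maximal ideal is isomorphic to a regular local ring modulo an ideal generated by a
regular sequence. -/
def IsCompleteIntersectionLocal (A : Type) [CommRing A] [IsLocalRing A] : Prop :=
  ∃ (R : Type) (_ : CommRing R) (_ : IsLocalRing R) (_ : IsNoetherianRing R) (rs : List R),
    IsRegularLocal R ∧ (∀ x ∈ rs, x ∈ maximalIdeal R) ∧
    RingTheory.Sequence.IsRegular R rs ∧
    Nonempty ((AdicCompletion (maximalIdeal A) A) ≃+* (R ⧸ Ideal.ofList rs))

/-- The ideal `Γ_{𝔪}(A)` of elements killed by a power of the maximal ideal. -/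
noncomputable def powerTorsionIdeal (A : Type) [CommRing A] [IsLocalRing A] : Ideal A :=
  ⨆ n : ℕ, Submodule.torsionBySet A A ((maximalIdeal A ^ n : Ideal A) : Set A)

end

lemma oModule_smul {𝒪 A : Type} [CommRing 𝒪] [CommRing A] (lam : A →+* 𝒪)
    (hs : Function.Surjective lam) (M : Type) [AddCommGroup M] [Module A M]
    (h : Module.IsTorsionBySet A M (RingHom.ker lam : Set A)) (a : A) (m : M) :
    (oModule lam hs M h).toSMul.smul (lam a) m = a • m := by
  show (letI := h.module;
    ((RingHom.quotientKerEquivOfSurjective hs).symm.toRingHom (lam a)) • m) = a • m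
  letI := h.module
  have h1 : (RingHom.quotientKerEquivOfSurjective hs).symm (lam a)
      = Ideal.Quotient.mk (RingHom.ker lam) a := by
    apply (RingHom.quotientKerEquivOfSurjective hs).injective
    rw [RingEquiv.apply_symm_apply]
    rfl
  show ((RingHom.quotientKerEquivOfSurjective hs).symm (lam a)) • m = a • m
  rw [h1, h.mk_smul]

lemma exists_ann
    (𝒪 : Type) [CommRing 𝒪] [IsDomain 𝒪] [IsDiscreteValuationRing 𝒪]
    (A : Type) [CommRing A] [IsNoetherianRing A]
    (lam : A →+* 𝒪) (hs : Function.Surjective lam)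
    (hfin : OFiniteLength lam hs (RingHom.ker lam).Cotangent
      (conormal_torsion (RingHom.ker lam))) :
    ∃ s : A, s ∉ RingHom.ker lam ∧ ∀ x ∈ RingHom.ker lam, s * x = 0 := by
  set P := RingHom.ker lam with hP
  letI inst := oModule lam hs P.Cotangent (conormal_torsion P)
  have hFL : IsFiniteLength 𝒪 P.Cotangent := hfin
  obtain ⟨hN, hA⟩ := isFiniteLength_iff_isNoetherian_isArtinian.mp hFL
  obtain ⟨ϖ, hϖ⟩ := IsDiscreteValuationRing.exists_irreducible 𝒪
  -- stabilizing descending chain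
  set N : ℕ → Submodule 𝒪 P.Cotangent := fun n => (Ideal.span {ϖ}) ^ n • ⊤ with hNdef
  obtain ⟨_, ⟨k, rfl⟩, hmin⟩ := IsArtinian.set_has_minimal (R := 𝒪) (M := P.Cotangent)
    (Set.range N) ⟨N 0, 0, rfl⟩
  have hdesc : N (k+1) ≤ N k := by
    rw [hNdef]
    exact Submodule.smul_mono (Ideal.pow_le_pow_right (Nat.le_succ k)) le_rfl
  have heq : N (k+1) = N k := by
    rcases lt_or_eq_of_le hdesc with h | h
    · exact absurd h (hmin _ ⟨k+1, rfl⟩)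
    · exact h
  have heq2 : N (k+1) = Ideal.span {ϖ} • N k := by
    rw [hNdef]
    simp only []
    rw [pow_succ, mul_comm, mul_smul]
  have hle : N k ≤ Ideal.span {ϖ} • N k := le_of_eq (heq.symm.trans heq2)
  have hjac : Ideal.span {ϖ} ≤ Ideal.jacobson ⊥ := by
    rw [IsLocalRing.jacobson_eq_maximalIdeal ⊥ bot_ne_top,
      ← (IsDiscreteValuationRing.irreducible_iff_uniformizer ϖ).mp hϖ]
  have hbot : N k = ⊥ :=
    Submodule.eq_bot_of_le_smul_of_le_jacobson_bot _ _ (IsNoetherian.noetherian _) hle hjac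
  have hkill : ∀ c : P.Cotangent, (ϖ ^ k) • c = 0 := by
    intro c
    have : (ϖ ^ k) • c ∈ N k :=
      Submodule.smul_mem_smul (Ideal.pow_mem_pow (Ideal.mem_span_singleton_self ϖ) k)
        Submodule.mem_top
    rwa [hbot, Submodule.mem_bot] at this
  obtain ⟨t, ht⟩ := hs (ϖ ^ k)
  have htP : t ∉ P := by
    intro h
    have : lam t = 0 := h
    rw [ht] at this
    exact pow_ne_zero k hϖ.ne_zero this
  have hP2 : ∀ x ∈ P, t * x ∈ P ^ 2 := by
    intro x hx
    have h0 : t • (P.toCotangent ⟨x, hx⟩) = 0 := by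
      rw [← oModule_smul lam hs _ (conormal_torsion P) t, ht]
      exact hkill _
    rw [← map_smul] at h0
    have := (P.toCotangent_eq_zero _).mp h0
    exact this
  -- localization
  classical
  haveI : P.IsPrime := RingHom.ker_isPrime lam
  set Aₚ := Localization.AtPrime P with hAₚ
  haveI : IsNoetherianRing Aₚ := IsLocalization.isNoetherianRing P.primeCompl Aₚ inferInstance
  set P' := P.map (algebraMap A Aₚ) with hP'
  have hunit : IsUnit (algebraMap A Aₚ t) :=
    (IsLocalization.AtPrime.isUnit_to_map_iff Aₚ P t).mpr htP
  have h1 : P' ≤ P' • P' := by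
    rw [smul_eq_mul, ← pow_two, hP', Ideal.map_le_iff_le_comap]
    intro x hx
    rw [Ideal.mem_comap]
    obtain ⟨u, hu⟩ := hunit
    have h2 : algebraMap A Aₚ (t * x) ∈ P' ^ 2 := by
      rw [← Ideal.map_pow]
      exact Ideal.mem_map_of_mem _ (hP2 x hx)
    have h3 : algebraMap A Aₚ x = ↑u⁻¹ * algebraMap A Aₚ (t * x) := by
      rw [map_mul, ← hu, Units.inv_mul_cancel_left]
    rw [h3]
    exact Ideal.mul_mem_left _ _ h2
  have hjac' : P' ≤ Ideal.jacobson ⊥ := by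
    rw [IsLocalRing.jacobson_eq_maximalIdeal ⊥ bot_ne_top,
      ← Localization.AtPrime.map_eq_maximalIdeal]
  have hbot' : P' = ⊥ :=
    Submodule.eq_bot_of_le_smul_of_le_jacobson_bot P' P' (IsNoetherian.noetherian _) h1 hjac'
  obtain ⟨T, hT⟩ := IsNoetherian.noetherian P
  have hx0 : ∀ x : {x // x ∈ T}, ∃ m : P.primeCompl, ↑m * (x : A) = 0 := by
    intro ⟨x, hx⟩
    have hxP : x ∈ P := by rw [← hT]; exact Submodule.subset_span hx
    have : algebraMap A Aₚ x = 0 := by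
      have := Ideal.mem_map_of_mem (algebraMap A Aₚ) hxP
      rw [← hP', hbot', Submodule.mem_bot] at this
      exact this
    exact (IsLocalization.map_eq_zero_iff P.primeCompl Aₚ x).mp this
  choose f hf using hx0
  set s₀ : P.primeCompl := ∏ x ∈ T.attach, f x with hs₀
  refine ⟨↑s₀, s₀.2, ?_⟩
  have hsx : ∀ x ∈ T, (s₀ : A) * x = 0 := by
    intro x hx
    have : s₀ = f ⟨x, hx⟩ * ∏ y ∈ T.attach.erase ⟨x, hx⟩, f y := by
      rw [hs₀, ← Finset.mul_prod_erase T.attach f (a := ⟨x, hx⟩) (Finset.mem_attach _ _)]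
    calc (s₀ : A) * x
        = (∏ y ∈ T.attach.erase ⟨x, hx⟩, (f y : A)) * ((f ⟨x, hx⟩ : A) * x) := by
          rw [this]; push_cast; ring
      _ = 0 := by rw [hf ⟨x, hx⟩, mul_zero]
  intro y hy
  rw [← hT] at hy
  induction hy using Submodule.span_induction with
  | mem z hz => exact hsx z hz
  | zero => exact mul_zero _
  | add a b _ _ ha hb => rw [mul_add, ha, hb, add_zero]
  | smul a z _ hz => rw [smul_eq_mul, mul_comm a z, ← mul_assoc, hz, zero_mul]

/-- Let `(A, λ_A)` be an object of `C_𝒪` and `M` a finitely generated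
`A`-module with `depth_A M ≥ 1`.  Then `M[𝔭_A] ∩ M[I_A] = 0`; in particular
`I_A·M ∩ 𝔭_A·M = 0`. -/
theorem statement4
    (𝒪 : Type) [CommRing 𝒪] [IsDomain 𝒪] [IsDiscreteValuationRing 𝒪]
    (A : Type) [CommRing A] [IsLocalRing A] [IsNoetherianRing A]
    (lam : A →+* 𝒪) (hs : Function.Surjective lam)
    (hfin : OFiniteLength lam hs (RingHom.ker lam).Cotangent
      (conormal_torsion (RingHom.ker lam)))
    (M : Type) [AddCommGroup M] [Module A M] [Module.Finite A M]
    (hdepth : 1 ≤ mDepth A M) :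
    Submodule.torsionBySet A M (RingHom.ker lam) ⊓
      Submodule.torsionBySet A M (Submodule.annihilator (RingHom.ker lam)) = ⊥ ∧
    (Submodule.annihilator (RingHom.ker lam) • (⊤ : Submodule A M)) ⊓
      (RingHom.ker lam • (⊤ : Submodule A M)) = ⊥ := by
  classical
  set P := RingHom.ker lam with hPdef
  obtain ⟨s, hsP, hsann⟩ := exists_ann 𝒪 A lam hs hfin
  -- a regular element in the maximal ideal
  have hex : ∃ n ∈ {n : ℕ∞ | ∃ rs : List A, (rs.length : ℕ∞) = n ∧
      (∀ x ∈ rs, x ∈ maximalIdeal A) ∧ RingTheory.Sequence.IsRegular M rs}, n ≠ 0 := by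
    by_contra h
    push_neg at h
    have h2 : mDepth A M ≤ 0 := sSup_le (fun n hn => le_of_eq (h n hn))
    have := le_trans hdepth h2
    simp at this
  obtain ⟨n, ⟨rs, hlen, hmem, hreg⟩, hn0⟩ := hex
  have hrsne : rs ≠ [] := by
    rintro rfl
    simp only [List.length_nil, Nat.cast_zero] at hlen
    exact hn0 hlen.symm
  obtain ⟨x, rest, rfl⟩ := List.exists_cons_of_ne_nil hrsne
  have hxm : x ∈ maximalIdeal A := hmem x List.mem_cons_self
  have hxreg : IsSMulRegular M x :=
    ((RingTheory.Sequence.isWeaklyRegular_cons_iff M x rest).mp hreg.toIsWeaklyRegular).1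
  -- powers of the maximal ideal are contained in P + (s)
  obtain ⟨ϖ, hϖ⟩ := IsDiscreteValuationRing.exists_irreducible 𝒪
  have hlams : lam s ≠ 0 := fun h => hsP h
  have hspan : Ideal.span {lam s} ≠ ⊥ := by
    rw [Ne, Ideal.span_singleton_eq_bot]; exact hlams
  obtain ⟨m0, hm0⟩ := IsDiscreteValuationRing.ideal_eq_span_pow_irreducible hspan hϖ
  have hmaxpow : maximalIdeal 𝒪 ^ m0 = Ideal.span {lam s} := by
    rw [(IsDiscreteValuationRing.irreducible_iff_uniformizer ϖ).mp hϖ,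
      Ideal.span_singleton_pow, hm0]
  have hPne : P ≠ ⊤ := by
    intro h
    have h1 : (1 : A) ∈ P := h.symm ▸ Submodule.mem_top
    rw [hPdef, RingHom.mem_ker, map_one] at h1
    exact one_ne_zero h1
  have hkerle : P ≤ maximalIdeal A := le_maximalIdeal hPne
  have hmapm : ∀ a ∈ maximalIdeal A, lam a ∈ maximalIdeal 𝒪 := by
    intro a ha
    rw [IsLocalRing.mem_maximalIdeal, mem_nonunits_iff]
    intro hu
    obtain ⟨c, hc⟩ := hu.exists_right_inv
    obtain ⟨b, rfl⟩ := hs c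
    have h1 : a * b - 1 ∈ P := by
      rw [hPdef, RingHom.mem_ker, map_sub, map_mul, map_one, hc, sub_self]
    have h2 : a * b ∈ maximalIdeal A := Ideal.mul_mem_right _ _ ha
    have h3 : (1 : A) ∈ maximalIdeal A := by
      have := Submodule.sub_mem _ h2 (hkerle h1)
      simp only [sub_sub_cancel] at this
      exact this
    exact (IsLocalRing.maximalIdeal.isMaximal A).ne_top ((Ideal.eq_top_iff_one _).mpr h3)
  have hkey : ∀ a ∈ maximalIdeal A ^ m0, ∃ b : A, a - s * b ∈ P := by
    intro a ha
    have h1 : lam a ∈ maximalIdeal 𝒪 ^ m0 := by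
      have h2 : lam a ∈ Ideal.map lam (maximalIdeal A ^ m0) := Ideal.mem_map_of_mem _ ha
      rw [Ideal.map_pow] at h2
      exact Ideal.pow_right_mono
        (Ideal.map_le_iff_le_comap.mpr (fun y hy => Ideal.mem_comap.mpr (hmapm y hy))) m0 h2
    rw [hmaxpow, Ideal.mem_span_singleton'] at h1
    obtain ⟨c, hc⟩ := h1
    obtain ⟨b, rfl⟩ := hs c
    refine ⟨b, ?_⟩
    rw [hPdef, RingHom.mem_ker, map_sub, map_mul]
    rw [mul_comm (lam s) (lam b), hc, sub_self]
  -- first statement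
  have part1 : Submodule.torsionBySet A M ↑P ⊓
      Submodule.torsionBySet A M ↑(Submodule.annihilator P) = ⊥ := by
    rw [eq_bot_iff]
    intro m hm
    rw [Submodule.mem_inf] at hm
    obtain ⟨hm1, hm2⟩ := hm
    rw [Submodule.mem_bot]
    have hsmem : s ∈ Submodule.annihilator P :=
      Submodule.mem_annihilator.mpr (fun y hy => by rw [smul_eq_mul]; exact hsann y hy)
    have hsm : s • m = 0 := (Submodule.mem_torsionBySet_iff _ _).mp hm2 ⟨s, hsmem⟩
    have hkill : ∀ a ∈ maximalIdeal A ^ m0, a • m = 0 := by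
      intro a ha
      obtain ⟨b, hb⟩ := hkey a ha
      have h1 : (a - s * b) • m = 0 := (Submodule.mem_torsionBySet_iff _ _).mp hm1 ⟨a - s * b, hb⟩
      have h2 : a • m = (a - s * b) • m + (s * b) • m := by
        rw [← add_smul, sub_add_cancel]
      rw [h2, h1, zero_add, mul_comm, mul_smul, hsm, smul_zero]
    have hxk : (x ^ m0) • m = 0 := hkill _ (Ideal.pow_mem_pow hxm m0)
    have hp : IsSMulRegular M (x ^ m0) := hxreg.pow m0
    exact hp (show (x ^ m0) • m = (x ^ m0) • (0 : M) by rw [hxk, smul_zero])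
  refine ⟨part1, ?_⟩
  rw [eq_bot_iff, ← part1]
  apply inf_le_inf
  · intro z hz
    refine Submodule.smul_induction_on hz ?_ (fun y w hy hw => Submodule.add_mem _ hy hw)
    intro a ha m _
    rw [Submodule.mem_torsionBySet_iff]
    rintro ⟨p, hp⟩
    show p • (a • m) = 0
    have h0 : a * p = 0 := by
      have := Submodule.mem_annihilator.mp ha p hp
      rwa [smul_eq_mul] at this
    rw [smul_smul, mul_comm, h0, zero_smul]
  · intro z hz
    refine Submodule.smul_induction_on hz ?_ (fun y w hy hw => Submodule.add_mem _ hy hw)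
    intro p hp m _
    rw [Submodule.mem_torsionBySet_iff]
    rintro ⟨a, ha⟩
    show a • (p • m) = 0
    have h0 : a * p = 0 := by
      have := Submodule.mem_annihilator.mp ha p hp
      rwa [smul_eq_mul] at this
    rw [smul_smul, h0, zero_smul]
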